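/- Let C ⊆ L⁰. The following are equivalent: (1) C is conditionally evenly convex; (2) C satisfies the countable concatenation property, and for every x ∈ L⁰ that is outside C there exists x′ ∈ L⁰ such that ξ·x′ < x·x′ a.e. on D_C for every ξ ∈ C. -/

import Mathlib

open MeasureTheory

variable {Ω : Type*} [MeasurableSpace Ω]

/-- The countable concatenation property (CSet): for every countable measurable partition
`{A n}` of `Ω` and every sequence `{x n} ⊆ C`, the concatenation `∑ n, 1_{A n} • x n`
(i.e. the element `z ∈ L⁰` agreeing a.e. with `x n` on each `A n`) belongs to `C`. -/
def CSet (μ : Measure Ω) (C : Set (Ω →ₘ[μ] ℝ)) : Prop :=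
  ∀ A : ℕ → Set Ω, (∀ n, MeasurableSet (A n)) → Pairwise (Function.onFun Disjoint A) →
    (⋃ n, A n) = Set.univ →
    ∀ x : ℕ → Ω →ₘ[μ] ℝ, (∀ n, x n ∈ C) →
      ∀ z : Ω →ₘ[μ] ℝ, (∀ n, ∀ᵐ ω ∂μ, ω ∈ A n → z ω = x n ω) → z ∈ C

/-- The countable concatenation hull `C^cc` of `C`. -/
def ccHull (μ : Measure Ω) (C : Set (Ω →ₘ[μ] ℝ)) : Set (Ω →ₘ[μ] ℝ) :=
  {z | ∃ (A : ℕ → Set Ω) (x : ℕ → Ω →ₘ[μ] ℝ),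
    (∀ n, MeasurableSet (A n)) ∧ Pairwise (Function.onFun Disjoint A) ∧
    (⋃ n, A n) = Set.univ ∧ (∀ n, x n ∈ C) ∧
    ∀ n, ∀ᵐ ω ∂μ, ω ∈ A n → z ω = x n ω}

/-- `C 1_A = L⁰ 1_A`: every `x ∈ L⁰` agrees a.e. on `A` with some element of `C`. -/
def FullOn (μ : Measure Ω) (C : Set (Ω →ₘ[μ] ℝ)) (A : Set Ω) : Prop :=
  ∀ x : Ω →ₘ[μ] ℝ, ∃ ξ ∈ C, ∀ᵐ ω ∂μ, ω ∈ A → x ω = ξ ω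

/-- `A` is (a version of) the maximal set `A_C` of the class
`{A ∈ 𝒢 ∣ C 1_A = L⁰ 1_A}`; its complement `Aᶜ` is then `D_C`. -/
def IsMaxFull (μ : Measure Ω) (C : Set (Ω →ₘ[μ] ℝ)) (A : Set Ω) : Prop :=
  MeasurableSet A ∧ FullOn μ C A ∧
    ∀ B : Set Ω, MeasurableSet B → FullOn μ C B → μ (B \ A) = 0

/-- `x` is locally separated from `C` on `H`: for every `B ⊆ H` with `μ B > 0`
there is no `ξ ∈ C` with `x = ξ` a.e. on `B`.  With `H = D_C` this is the paper's
notion of `x` being outside `C`. -/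
def LocOutside (μ : Measure Ω) (C : Set (Ω →ₘ[μ] ℝ)) (x : Ω →ₘ[μ] ℝ) (H : Set Ω) : Prop :=
  ∀ B : Set Ω, MeasurableSet B → B ⊆ H → 0 < μ B →
    ¬ ∃ ξ ∈ C, ∀ᵐ ω ∂μ, ω ∈ B → x ω = ξ ω

/-- `H` is (a version of) the largest measurable set `H_{C,x}` on which `x` is locally
separated from `C`. -/
def IsMaxLocOutside (μ : Measure Ω) (C : Set (Ω →ₘ[μ] ℝ)) (x : Ω →ₘ[μ] ℝ) (H : Set Ω) : Prop :=
  MeasurableSet H ∧ LocOutside μ C x H ∧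
    ∀ B : Set Ω, MeasurableSet B → LocOutside μ C x B → μ (B \ H) = 0

/-- `C ⊆ L⁰` is conditionally evenly convex: there are a family `L ⊆ L⁰` and
`Y_{x'} ∈ L⁰` for each `x' ∈ L` with
`C = ⋂_{x' ∈ L} {x ∣ x·x' < Y_{x'} a.e. on D_C}` (where `D_C = Aᶜ` for the maximal
full set `A = A_C`; the case `L = ∅` gives `C = L⁰`). -/
def CondEvenlyConvex (μ : Measure Ω) (C : Set (Ω →ₘ[μ] ℝ)) : Prop :=
  ∃ A : Set Ω, IsMaxFull μ C A ∧
    ∃ (L : Set (Ω →ₘ[μ] ℝ)) (Y : (Ω →ₘ[μ] ℝ) → Ω →ₘ[μ] ℝ),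
      C = ⋂ x' ∈ L, {x : Ω →ₘ[μ] ℝ | ∀ᵐ ω ∂μ, ω ∈ Aᶜ → x ω * x' ω < Y x' ω}

/-- The polar `C°` of `C` (relative to `D = D_C`). -/
def polarSet (μ : Measure Ω) (C : Set (Ω →ₘ[μ] ℝ)) (D : Set Ω) : Set (Ω →ₘ[μ] ℝ) :=
  {x' | ∀ x ∈ C, ∀ᵐ ω ∂μ, ω ∈ D → x ω * x' ω < 1}

/-- The bipolar `C°°` of `C` (relative to `D = D_C`). -/
def bipolarSet (μ : Measure Ω) (C : Set (Ω →ₘ[μ] ℝ)) (D : Set Ω) : Set (Ω →ₘ[μ] ℝ) :=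
  {x | ∀ x' ∈ polarSet μ C D, ∀ᵐ ω ∂μ, ω ∈ D → x ω * x' ω < 1}


namespace EvenlyAux

open scoped Classical

variable {Ω : Type*} [MeasurableSpace Ω] {μ : Measure Ω}

/-- Glue a countable family of `AEEqFun`s along the disjointification of a family of
measurable sets. -/
lemma exists_glue (A : ℕ → Set Ω) (hA : ∀ n, MeasurableSet (A n)) (x : ℕ → Ω →ₘ[μ] ℝ) :
    ∃ z : Ω →ₘ[μ] ℝ, ∀ n, ∀ᵐ ω ∂μ, ω ∈ disjointed A n → z ω = (x n) ω := by
  set D := disjointed A with hD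
  have hDm : ∀ n, MeasurableSet (D n) := MeasurableSet.disjointed hA
  have hDd : Pairwise (Function.onFun Disjoint D) := disjoint_disjointed A
  set p : ℕ → Ω → Prop := fun n ω => ω ∈ D n ∨ ω ∉ ⋃ k, A k with hp
  have htot : ∀ ω, ∃ n, p n ω := by
    intro ω
    by_cases h : ω ∈ ⋃ k, A k
    · rw [← iUnion_disjointed] at h
      obtain ⟨n, hn⟩ := Set.mem_iUnion.1 h
      exact ⟨n, Or.inl hn⟩
    · exact ⟨0, Or.inr h⟩
  have hpm : ∀ n, MeasurableSet {ω | p n ω} := by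
    intro n
    have : {ω | p n ω} = D n ∪ (⋃ k, A k)ᶜ := rfl
    rw [this]
    exact (hDm n).union (MeasurableSet.iUnion hA).compl
  set f : Ω → ℝ := fun ω => (x (Nat.find (htot ω))) ω with hf
  have hfm : Measurable f :=
    Measurable.find (fun n => (x n).measurable) hpm htot
  refine ⟨AEEqFun.mk f hfm.aestronglyMeasurable, ?_⟩
  intro n
  filter_upwards [AEEqFun.coeFn_mk f hfm.aestronglyMeasurable] with ω hω hmem
  rw [hω, hf]
  have hfind : Nat.find (htot ω) = n := by
    have hωU : ω ∈ ⋃ k, A k := by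
      rw [← iUnion_disjointed]; exact Set.mem_iUnion.2 ⟨n, hmem⟩
    have h1 : p (Nat.find (htot ω)) ω := Nat.find_spec (htot ω)
    rcases h1 with h1 | h1
    · by_contra hne
      exact (hDd hne).le_bot ⟨h1, hmem⟩
    · exact absurd hωU h1
  show (x (Nat.find (htot ω))) ω = (x n) ω
  rw [hfind]

/-- Paste two `AEEqFun`s along a measurable set. -/
lemma exists_paste {H : Set Ω} (hH : MeasurableSet H) (x z : Ω →ₘ[μ] ℝ) :
    ∃ v : Ω →ₘ[μ] ℝ, (∀ᵐ ω ∂μ, ω ∈ H → v ω = x ω) ∧ (∀ᵐ ω ∂μ, ω ∉ H → v ω = z ω) := by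
  set f : Ω → ℝ := fun ω => if ω ∈ H then x ω else z ω with hf
  have hfm : Measurable f := Measurable.ite hH x.measurable z.measurable
  refine ⟨AEEqFun.mk f hfm.aestronglyMeasurable, ?_, ?_⟩ <;>
    filter_upwards [AEEqFun.coeFn_mk f hfm.aestronglyMeasurable] with ω hω hmem <;>
    rw [hω, hf] <;> simp [hmem]

/-- A class of measurable sets closed under countable unions has a maximal element
up to null sets. -/
lemma exists_maximal [IsFiniteMeasure μ] (P : Set Ω → Prop)
    (hmeas : ∀ B, P B → MeasurableSet B) (h0 : P ∅) (hU : ∀ B : ℕ → Set Ω, (∀ n, P (B n)) → P (⋃ n, B n)) :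
    ∃ M, P M ∧ ∀ B, P B → μ (B \ M) = 0 := by
  set S : Set ENNReal := μ '' {B | P B} with hS
  have hne : S.Nonempty := ⟨μ ∅, ⟨∅, h0, rfl⟩⟩
  obtain ⟨u, -, hu, huS⟩ := exists_seq_tendsto_sSup hne (OrderTop.bddAbove S)
  choose B hB hBu using huS
  set M := ⋃ n, B n with hM
  have hPM : P M := hU B hB
  have hsM : sSup S ≤ μ M := by
    refine le_of_tendsto hu (Filter.Eventually.of_forall fun n => ?_)
    rw [← hBu n]
    exact measure_mono (Set.subset_iUnion B n)
  refine ⟨M, hPM, fun B' hB' => ?_⟩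
  have hP2 : P (M ∪ B') := by
    have := hU (fun k => if k = 0 then B' else M) (by
      intro k; by_cases h : k = 0 <;> simp [h, hPM, hB'])
    have heq : (⋃ k, if k = 0 then B' else M) = M ∪ B' := by
      apply Set.Subset.antisymm
      · intro ω hω
        obtain ⟨k, hk⟩ := Set.mem_iUnion.1 hω
        by_cases h : k = 0
        · right; simpa [h] using hk
        · left; simpa [h] using hk
      · intro ω hω
        rcases hω with hω | hω
        · exact Set.mem_iUnion.2 ⟨1, by simpa using hω⟩
        · exact Set.mem_iUnion.2 ⟨0, by simpa using hω⟩
    rwa [heq] at this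
  have h1 : μ (M ∪ B') ≤ μ M := by
    have : μ (M ∪ B') ≤ sSup S := le_sSup ⟨M ∪ B', hP2, rfl⟩
    exact this.trans hsM
  have h2 : μ M + μ (B' \ M) = μ (M ∪ B') :=
    measure_add_diff ((hmeas M hPM).nullMeasurableSet) B'
  have h3 : μ M + μ (B' \ M) ≤ μ M + 0 := by rw [h2, add_zero]; exact h1
  have h4 := ENNReal.le_of_add_le_add_left (measure_ne_top μ M) h3
  exact le_antisymm h4 zero_le


variable {C : Set (Ω →ₘ[μ] ℝ)} {A : Set Ω}

/-- Maximal set on which `x` agrees with some element of `C` (needs `CSet`). -/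
lemma exists_agree_max [IsFiniteMeasure μ] (hC : CSet μ C) {ξ₀ : Ω →ₘ[μ] ℝ} (hξ₀ : ξ₀ ∈ C)
    (x : Ω →ₘ[μ] ℝ) :
    ∃ M, (MeasurableSet M ∧ ∃ ξ ∈ C, ∀ᵐ ω ∂μ, ω ∈ M → x ω = ξ ω) ∧
      ∀ B, MeasurableSet B → (∃ ξ ∈ C, ∀ᵐ ω ∂μ, ω ∈ B → x ω = ξ ω) → μ (B \ M) = 0 := by
  set P : Set Ω → Prop :=
    fun B => MeasurableSet B ∧ ∃ ξ ∈ C, ∀ᵐ ω ∂μ, ω ∈ B → x ω = ξ ω with hP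
  have h0 : P ∅ := ⟨MeasurableSet.empty, ξ₀, hξ₀, Filter.Eventually.of_forall (by simp)⟩
  have hU : ∀ B : ℕ → Set Ω, (∀ n, P (B n)) → P (⋃ n, B n) := by
    intro B hB
    have hBm : ∀ n, MeasurableSet (B n) := fun n => (hB n).1
    choose ξ hξC hξ using fun n => (hB n).2
    set A' : ℕ → Set Ω := fun k => Nat.casesOn k (⋃ n, B n)ᶜ B with hA'
    have hA'm : ∀ k, MeasurableSet (A' k) := by
      intro k; cases k with
      | zero => exact (MeasurableSet.iUnion hBm).compl
      | succ n => exact hBm n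
    set x' : ℕ → Ω →ₘ[μ] ℝ := fun k => Nat.casesOn k ξ₀ ξ with hx'
    have hx'C : ∀ k, x' k ∈ C := by
      intro k; cases k with
      | zero => exact hξ₀
      | succ n => exact hξC n
    have hcov : (⋃ k, A' k) = Set.univ := by
      apply Set.eq_univ_of_forall; intro ω
      by_cases h : ω ∈ ⋃ n, B n
      · obtain ⟨n, hn⟩ := Set.mem_iUnion.1 h; exact Set.mem_iUnion.2 ⟨n + 1, hn⟩
      · exact Set.mem_iUnion.2 ⟨0, h⟩
    obtain ⟨z, hz⟩ := exists_glue A' hA'm x'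
    have hzC : z ∈ C := hC (disjointed A') (MeasurableSet.disjointed hA'm)
      (disjoint_disjointed A') (by rw [iUnion_disjointed]; exact hcov) x' hx'C z hz
    refine ⟨MeasurableSet.iUnion hBm, z, hzC, ?_⟩
    have h1 : ∀ᵐ ω ∂μ, ∀ k, ω ∈ disjointed A' k → z ω = x' k ω := ae_all_iff.2 hz
    have h2 : ∀ᵐ ω ∂μ, ∀ n, ω ∈ B n → x ω = ξ n ω := ae_all_iff.2 hξ
    filter_upwards [h1, h2] with ω hω1 hω2 hmem
    have hωU : ω ∈ ⋃ k, disjointed A' k := by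
      rw [iUnion_disjointed, hcov]; trivial
    obtain ⟨k, hk⟩ := Set.mem_iUnion.1 hωU
    cases k with
    | zero => exact absurd hmem (disjointed_subset A' 0 hk)
    | succ n =>
      have hmemB : ω ∈ B n := disjointed_subset A' (n + 1) hk
      rw [hω2 n hmemB, ← hω1 _ hk]
  obtain ⟨M, hM, hmax⟩ := exists_maximal (μ := μ) P (fun B hB => hB.1) h0 hU
  exact ⟨M, hM, fun B hBm hBagree => hmax B ⟨hBm, hBagree⟩⟩

lemma maxFull_nonempty (hA : IsMaxFull μ C A) : ∃ ξ₀, ξ₀ ∈ C := by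
  obtain ⟨ξ, hξ, -⟩ := hA.2.1 0
  exact ⟨ξ, hξ⟩

/-- Inside any positive-measure subset of `Aᶜ` there is a positive-measure subset
carrying a locally-outside element. -/
lemma exists_locOutside_subset [IsFiniteMeasure μ] (hC : CSet μ C) (hA : IsMaxFull μ C A)
    {E : Set Ω} (hEm : MeasurableSet E) (hEA : E ⊆ Aᶜ) (hEpos : 0 < μ E) :
    ∃ F, MeasurableSet F ∧ F ⊆ E ∧ 0 < μ F ∧ ∃ y, LocOutside μ C y F := by
  obtain ⟨ξ₀, hξ₀⟩ := maxFull_nonempty hA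
  have hnotFull : ¬ FullOn μ C E := by
    intro hFull
    have := hA.2.2 E hEm hFull
    rw [Set.diff_eq, Set.inter_eq_self_of_subset_left hEA] at this
    exact hEpos.ne' this
  rw [FullOn] at hnotFull
  push_neg at hnotFull
  obtain ⟨y, hy⟩ := hnotFull
  obtain ⟨M, ⟨hMm, ξM, hξM, hagrM⟩, hmax⟩ := exists_agree_max hC hξ₀ y
  refine ⟨E \ M, hEm.diff hMm, Set.diff_subset, ?_, y, ?_⟩
  · rcases (zero_le : (0:ENNReal) ≤ (μ (E \ M))).lt_or_eq with h | h
    · exact h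
    · exfalso
      apply hy ξM hξM
      have hnull : ∀ᵐ ω ∂μ, ω ∉ E \ M := by
        rw [ae_iff]
        convert h.symm using 2
        ext ω
        simp
      filter_upwards [hagrM, hnull] with ω h1 h2 hE
      exact hE.2 (h1 (by by_contra h3; exact h2 ⟨hE.1, h3⟩))
  · intro B hBm hBsub hBpos ⟨ξ, hξ, hagr⟩
    have : μ (B \ M) = 0 := hmax B hBm ⟨ξ, hξ, hagr⟩
    have hBM : B \ M = B :=
      Set.Subset.antisymm Set.diff_subset fun ω hω => ⟨hω, (hBsub hω).2⟩
    rw [hBM] at this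
    exact hBpos.ne' this

/-- There is an element of `L⁰` which is locally outside `C` on all of `Aᶜ`. -/
lemma exists_outside_everywhere [IsFiniteMeasure μ] (hC : CSet μ C) (hA : IsMaxFull μ C A) :
    ∃ z : Ω →ₘ[μ] ℝ, LocOutside μ C z Aᶜ := by
  obtain ⟨ξ₀, hξ₀⟩ := maxFull_nonempty hA
  set P : Set Ω → Prop :=
    fun H => MeasurableSet H ∧ H ⊆ Aᶜ ∧ ∃ w, LocOutside μ C w H with hP
  have h0 : P ∅ := ⟨MeasurableSet.empty, Set.empty_subset _, ξ₀, by
    intro B hBm hBsub hBpos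
    rw [Set.subset_empty_iff] at hBsub
    rw [hBsub] at hBpos
    simp at hBpos⟩
  have hU : ∀ H : ℕ → Set Ω, (∀ n, P (H n)) → P (⋃ n, H n) := by
    intro H hH
    have hHm : ∀ n, MeasurableSet (H n) := fun n => (hH n).1
    choose w hw using fun n => (hH n).2.2
    obtain ⟨z, hz⟩ := exists_glue H hHm w
    refine ⟨MeasurableSet.iUnion hHm, Set.iUnion_subset fun n => (hH n).2.1, z, ?_⟩
    intro B hBm hBsub hBpos ⟨ξ, hξ, hagr⟩
    -- some piece B ∩ disjointed H n has positive measure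
    have hcover : B = ⋃ n, B ∩ disjointed H n := by
      rw [← Set.inter_iUnion, iUnion_disjointed]
      exact (Set.inter_eq_self_of_subset_left hBsub).symm
    have : ∃ n, 0 < μ (B ∩ disjointed H n) := by
      by_contra hcon
      push_neg at hcon
      have : μ B = 0 := by
        rw [hcover]
        exact measure_iUnion_null fun n => le_antisymm (hcon n) zero_le
      exact hBpos.ne' this
    obtain ⟨n, hn⟩ := this
    refine hw n (B ∩ disjointed H n) (hBm.inter ((MeasurableSet.disjointed hHm) n))
      ((Set.inter_subset_right).trans (disjointed_subset _ _)) hn ⟨ξ, hξ, ?_⟩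
    filter_upwards [hagr, hz n] with ω h1 h2 hmem
    rw [← h2 hmem.2]
    exact h1 hmem.1
  obtain ⟨G, ⟨hGm, hGA, zG, hzG⟩, hmax⟩ := exists_maximal (μ := μ) P (fun B hB => hB.1) h0 hU
  have hnull : μ (Aᶜ \ G) = 0 := by
    by_contra hcon
    have hpos : 0 < μ (Aᶜ \ G) := (zero_le : (0:ENNReal) ≤ _).lt_of_ne (Ne.symm hcon)
    obtain ⟨F, hFm, hFsub, hFpos, y, hy⟩ :=
      exists_locOutside_subset hC hA (hA.1.compl.diff hGm) Set.diff_subset hpos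
    have := hmax F ⟨hFm, fun ω hω => (hFsub hω).1, y, hy⟩
    have hFG : F \ G = F := by
      apply Set.Subset.antisymm Set.diff_subset
      intro ω hω
      exact ⟨hω, (hFsub hω).2⟩
    rw [hFG] at this
    exact hFpos.ne' this
  refine ⟨zG, ?_⟩
  intro B hBm hBsub hBpos ⟨ξ, hξ, hagr⟩
  have hBGpos : 0 < μ (B ∩ G) := by
    have h1 : μ (B \ G) = 0 := by
      apply measure_mono_null _ hnull
      intro ω hω
      exact ⟨hBsub hω.1, hω.2⟩
    have h2 : μ B ≤ μ (B ∩ G) + μ (B \ G) := by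
      calc μ B = μ ((B ∩ G) ∪ (B \ G)) := by rw [Set.inter_union_diff]
        _ ≤ μ (B ∩ G) + μ (B \ G) := measure_union_le _ _
    rw [h1, add_zero] at h2
    exact hBpos.trans_le h2
  exact hzG (B ∩ G) (hBm.inter hGm) Set.inter_subset_right hBGpos
    ⟨ξ, hξ, by filter_upwards [hagr] with ω h1 hmem; exact h1 hmem.1⟩

/-- Validity of a threshold `t` for the functional `w`. -/
def Valid (μ : Measure Ω) (C : Set (Ω →ₘ[μ] ℝ)) (A : Set Ω) (w t : Ω →ₘ[μ] ℝ) : Prop :=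
  (∀ᵐ ω ∂μ, t ω = -1 ∨ t ω = 0 ∨ t ω = 1) ∧
    ∀ ξ ∈ C, ∀ᵐ ω ∂μ, ω ∈ Aᶜ → ξ ω * w ω < t ω

lemma integrable_of_tri [IsProbabilityMeasure μ] {t : Ω →ₘ[μ] ℝ}
    (h : ∀ᵐ ω ∂μ, t ω = -1 ∨ t ω = 0 ∨ t ω = 1) : Integrable (⇑t) μ := by
  refine Integrable.mono' (integrable_const (1 : ℝ)) t.aestronglyMeasurable ?_
  filter_upwards [h] with ω hω
  rcases hω with h | h | h <;> rw [h] <;> norm_num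

lemma exists_min_valid [IsProbabilityMeasure μ] {C : Set (Ω →ₘ[μ] ℝ)} {A : Set Ω}
    {w : Ω →ₘ[μ] ℝ} (hw : ∃ t, Valid μ C A w t) :
    ∃ t₀, Valid μ C A w t₀ ∧ ∀ t, Valid μ C A w t → ∀ᵐ ω ∂μ, t₀ ω ≤ t ω := by
  haveI hne : Nonempty {t // Valid μ C A w t} := ⟨⟨hw.choose, hw.choose_spec⟩⟩
  set I : {t // Valid μ C A w t} → ℝ := fun t => ∫ ω, t.1 ω ∂μ with hI
  have hint : ∀ t : {t // Valid μ C A w t}, Integrable (⇑t.1) μ :=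
    fun t => integrable_of_tri t.2.1
  have hlb : ∀ t : {t // Valid μ C A w t}, -1 ≤ I t := by
    intro t
    have : ∫ _ : Ω, (-1 : ℝ) ∂μ ≤ ∫ ω, t.1 ω ∂μ := by
      refine integral_mono_ae (integrable_const _) (hint t) ?_
      filter_upwards [t.2.1] with ω hω
      rcases hω with h | h | h <;> rw [h] <;> norm_num
    simpa using this
  have hbdd : BddBelow (Set.range I) := ⟨-1, fun r ⟨t, ht⟩ => ht ▸ hlb t⟩
  set s : ℝ := ⨅ t, I t with hs
  have hts : ∀ n : ℕ, ∃ t : {t // Valid μ C A w t}, I t < s + 1 / (n + 1) := by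
    intro n
    apply exists_lt_of_ciInf_lt
    rw [← hs]
    exact lt_add_of_pos_right s (by positivity)
  choose tsel htsel using hts
  set S1 : Set Ω := ⋂ n, {ω | 1 ≤ (tsel n).1 ω} with hS1
  set S0 : Set Ω := ⋂ n, {ω | -1 < (tsel n).1 ω} with hS0
  have hS1m : MeasurableSet S1 :=
    MeasurableSet.iInter fun n => measurableSet_le measurable_const (tsel n).1.measurable
  have hS0m : MeasurableSet S0 :=
    MeasurableSet.iInter fun n => measurableSet_lt measurable_const (tsel n).1.measurable
  set g : Ω → ℝ := fun ω => if ω ∈ S1 then 1 else if ω ∈ S0 then 0 else -1 with hg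
  have hgm : Measurable g := by
    refine Measurable.ite hS1m measurable_const (Measurable.ite hS0m measurable_const
      measurable_const)
  set t₀ : Ω →ₘ[μ] ℝ := AEEqFun.mk g hgm.aestronglyMeasurable with ht₀
  have ht₀g : ∀ᵐ ω ∂μ, t₀ ω = g ω := AEEqFun.coeFn_mk g hgm.aestronglyMeasurable
  have hvals : ∀ᵐ ω ∂μ, ∀ n, (tsel n).1 ω = -1 ∨ (tsel n).1 ω = 0 ∨ (tsel n).1 ω = 1 :=
    ae_all_iff.2 fun n => (tsel n).2.1
  -- pointwise: g is attained and is a lower bound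
  have hkey : ∀ ω, (∀ n, (tsel n).1 ω = -1 ∨ (tsel n).1 ω = 0 ∨ (tsel n).1 ω = 1) →
      (∃ n, g ω = (tsel n).1 ω) ∧ ∀ n, g ω ≤ (tsel n).1 ω := by
    intro ω hω
    by_cases h1 : ω ∈ S1
    · have hg1 : g ω = 1 := by rw [hg]; simp [h1]
      have hall : ∀ n, (tsel n).1 ω = 1 := by
        intro n
        have h1n : (1 : ℝ) ≤ (tsel n).1 ω := Set.mem_iInter.1 h1 n
        rcases hω n with h | h | h
        · linarith
        · linarith
        · exact h
      exact ⟨⟨0, by rw [hg1, hall 0]⟩, fun n => by rw [hg1, hall n]⟩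
    · by_cases h0 : ω ∈ S0
      · have hg0 : g ω = 0 := by rw [hg]; simp [h1, h0]
        have hge : ∀ n, 0 ≤ (tsel n).1 ω := by
          intro n
          have h0n : (-1 : ℝ) < (tsel n).1 ω := Set.mem_iInter.1 h0 n
          rcases hω n with h | h | h
          · linarith
          · linarith
          · linarith
        obtain ⟨n, hn⟩ : ∃ n, ¬ 1 ≤ (tsel n).1 ω := by
          by_contra hcon
          push_neg at hcon
          exact h1 (Set.mem_iInter.2 fun n => hcon n)
        have : (tsel n).1 ω = 0 := by
          rcases hω n with h | h | h
          · exact absurd (h ▸ hge n) (by norm_num)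
          · exact h
          · exact absurd (le_of_eq h.symm) hn
        exact ⟨⟨n, by rw [hg0, this]⟩, fun m => by rw [hg0]; exact hge m⟩
      · have hgneg : g ω = -1 := by rw [hg]; simp [h1, h0]
        obtain ⟨n, hn⟩ : ∃ n, ¬ (-1 : ℝ) < (tsel n).1 ω := by
          by_contra hcon
          push_neg at hcon
          exact h0 (Set.mem_iInter.2 fun n => hcon n)
        push_neg at hn
        have : (tsel n).1 ω = -1 := by
          rcases hω n with h | h | h
          · exact h
          · exact absurd (h ▸ hn) (by norm_num)
          · exact absurd (h ▸ hn) (by norm_num)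
        refine ⟨⟨n, by rw [hgneg, this]⟩, fun m => ?_⟩
        rw [hgneg]
        rcases hω m with h | h | h <;> rw [h] <;> norm_num
  have ht₀vals : ∀ᵐ ω ∂μ, t₀ ω = -1 ∨ t₀ ω = 0 ∨ t₀ ω = 1 := by
    filter_upwards [ht₀g] with ω hω
    rw [hω, hg]
    by_cases h1 : ω ∈ S1 <;> by_cases h0 : ω ∈ S0 <;> simp [h1, h0]
  have ht₀valid : Valid μ C A w t₀ := by
    refine ⟨ht₀vals, fun ξ hξ => ?_⟩
    have hstr : ∀ᵐ ω ∂μ, ∀ n, ω ∈ Aᶜ → ξ ω * w ω < (tsel n).1 ω :=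
      ae_all_iff.2 fun n => (tsel n).2.2 ξ hξ
    filter_upwards [hstr, hvals, ht₀g] with ω h1 h2 h3 hmem
    obtain ⟨⟨n, hn⟩, -⟩ := hkey ω h2
    rw [h3, hn]
    exact h1 n hmem
  have hint₀ : Integrable (⇑t₀) μ := integrable_of_tri ht₀vals
  have hIle : ∫ ω, t₀ ω ∂μ ≤ s := by
    have hn : ∀ n : ℕ, ∫ ω, t₀ ω ∂μ ≤ s + 1 / (n + 1) := by
      intro n
      refine le_trans ?_ (htsel n).le
      refine integral_mono_ae hint₀ (hint (tsel n)) ?_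
      filter_upwards [hvals, ht₀g] with ω h1 h2
      rw [h2]
      exact (hkey ω h1).2 n
    by_contra hcon
    push_neg at hcon
    obtain ⟨n, hn'⟩ := exists_nat_one_div_lt (sub_pos.2 hcon)
    have := hn n
    have : (1 : ℝ) / (n + 1) < 1 / (n + 1) := by
      calc (1 : ℝ) / (n + 1) < ∫ ω, t₀ ω ∂μ - s := hn'
        _ ≤ 1 / (n + 1) := by linarith [hn n]
    exact lt_irrefl _ this
  refine ⟨t₀, ht₀valid, ?_⟩
  intro t ht
  set m : Ω →ₘ[μ] ℝ :=
    AEEqFun.mk (fun ω => min (g ω) (t ω)) ((hgm.min t.measurable).aestronglyMeasurable) with hm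
  have hmg : ∀ᵐ ω ∂μ, m ω = min (g ω) (t ω) :=
    AEEqFun.coeFn_mk _ _
  have hmvals : ∀ᵐ ω ∂μ, m ω = -1 ∨ m ω = 0 ∨ m ω = 1 := by
    filter_upwards [hmg, ht.1, ht₀g, ht₀vals] with ω h1 h2 h3 h4
    rw [h1]
    rcases min_choice (g ω) (t ω) with h | h <;> rw [h]
    · rw [← h3]; exact h4
    · exact h2
  have hmvalid : Valid μ C A w m := by
    refine ⟨hmvals, fun ξ hξ => ?_⟩
    filter_upwards [ht₀valid.2 ξ hξ, ht.2 ξ hξ, hmg, ht₀g] with ω h1 h2 h3 h4 hmem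
    rw [h3]
    exact lt_min (by rw [← h4]; exact h1 hmem) (h2 hmem)
  have hsle : s ≤ ∫ ω, m ω ∂μ := ciInf_le hbdd ⟨m, hmvalid⟩
  have hintm : Integrable (⇑m) μ := integrable_of_tri hmvals
  have hdiff0 : ∀ᵐ ω ∂μ, t₀ ω = m ω := by
    have hnonneg : 0 ≤ᵐ[μ] fun ω => t₀ ω - m ω := by
      filter_upwards [hmg, ht₀g] with ω h1 h2
      simp only [Pi.zero_apply, sub_nonneg, h1, h2]
      exact min_le_left _ _
    have hintd : Integrable (fun ω => t₀ ω - m ω) μ := hint₀.sub hintm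
    have hile : ∫ ω, (t₀ ω - m ω) ∂μ ≤ 0 := by
      rw [integral_sub hint₀ hintm]
      linarith [hIle, hsle]
    have hige : 0 ≤ ∫ ω, (t₀ ω - m ω) ∂μ := integral_nonneg_of_ae hnonneg
    have hzero : ∫ ω, (t₀ ω - m ω) ∂μ = 0 := le_antisymm hile hige
    have := (integral_eq_zero_iff_of_nonneg_ae hnonneg hintd).1 hzero
    filter_upwards [this] with ω hω
    have : t₀ ω - m ω = 0 := hω
    linarith
  filter_upwards [hdiff0, hmg, ht₀g] with ω h1 h2 h3
  rw [h1, h2]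
  exact min_le_right _ _

/-- sign function with values in `{-1,0,1}`. -/
noncomputable def sgnFun (r : ℝ) : ℝ := if r = 0 then 0 else if 0 < r then 1 else -1

/-- normalization factor. -/
noncomputable def cFun (r : ℝ) : ℝ := if r = 0 then 1 else |r|⁻¹

lemma sgnFun_tri (r : ℝ) : sgnFun r = -1 ∨ sgnFun r = 0 ∨ sgnFun r = 1 := by
  unfold sgnFun
  by_cases h : r = 0
  · simp [h]
  · by_cases h' : 0 < r <;> simp [h, h']

lemma measurableSet_eq_zero : MeasurableSet {r : ℝ | r = 0} := by
  have : {r : ℝ | r = 0} = {(0 : ℝ)} := by ext r; simp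
  rw [this]
  exact MeasurableSet.singleton 0

lemma measurable_sgnFun : Measurable sgnFun := by
  unfold sgnFun
  exact Measurable.ite measurableSet_eq_zero measurable_const
    (Measurable.ite (measurableSet_lt measurable_const measurable_id) measurable_const
      measurable_const)

lemma measurable_cFun : Measurable cFun := by
  unfold cFun
  exact Measurable.ite measurableSet_eq_zero measurable_const
    (continuous_abs.measurable.inv)

lemma cFun_mul_lt {r s : ℝ} (h : s < r) : cFun r * s < sgnFun r := by
  unfold cFun sgnFun
  rcases lt_trichotomy r 0 with hr | hr | hr
  · rw [if_neg hr.ne, if_neg hr.ne, if_neg (not_lt.2 hr.le), abs_of_neg hr]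
    have hr' : (0 : ℝ) < -r := by linarith
    rw [inv_mul_eq_div, div_lt_iff₀ hr']
    nlinarith
  · rw [hr] at h ⊢
    simpa using h
  · rw [if_neg hr.ne', if_neg hr.ne', if_pos hr, abs_of_pos hr]
    rw [inv_mul_eq_div, div_lt_iff₀ hr]
    nlinarith
lemma cFun_mul_self (r : ℝ) : cFun r * r = sgnFun r := by
  unfold cFun sgnFun
  rcases lt_trichotomy r 0 with hr | hr | hr
  · rw [if_neg hr.ne, if_neg hr.ne, if_neg (not_lt.2 hr.le), abs_of_neg hr]
    rw [inv_mul_eq_div, div_neg, div_self hr.ne]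
  · simp [hr]
  · rw [if_neg hr.ne', if_neg hr.ne', if_pos hr, abs_of_pos hr]
    field_simp

/-- construction of a separating normalized pair for `x ∉ C`. -/
lemma exists_witness [IsProbabilityMeasure μ] {C : Set (Ω →ₘ[μ] ℝ)} {A : Set Ω}
    (hC : CSet μ C) (hA : IsMaxFull μ C A)
    (hsep : ∀ x : Ω →ₘ[μ] ℝ, LocOutside μ C x Aᶜ →
      ∃ x' : Ω →ₘ[μ] ℝ, ∀ ξ ∈ C, ∀ᵐ ω ∂μ, ω ∈ Aᶜ → ξ ω * x' ω < x ω * x' ω)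
    {x : Ω →ₘ[μ] ℝ} (hx : x ∉ C) :
    ∃ w t H, Valid μ C A w t ∧ MeasurableSet H ∧ H ⊆ Aᶜ ∧ 0 < μ H ∧
      ∀ᵐ ω ∂μ, ω ∈ H → x ω * w ω = t ω := by
  obtain ⟨ξ₀, hξ₀⟩ := maxFull_nonempty hA
  obtain ⟨M, ⟨hMm, ξM, hξM, hagrM⟩, hmax⟩ := exists_agree_max hC hξ₀ x
  set H := Aᶜ \ M with hH
  have hHm : MeasurableSet H := hA.1.compl.diff hMm
  have hHA : H ⊆ Aᶜ := Set.diff_subset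
  have hHpos : 0 < μ H := by
    rcases (zero_le : (0:ENNReal) ≤ (μ H)).lt_or_eq with h | h
    · exact h
    exfalso
    obtain ⟨ξA, hξA, hagrA⟩ := hA.2.1 x
    have hAnull : μ (A \ M) = 0 := hmax A hA.1 ⟨ξA, hξA, hagrA⟩
    have hMfull : ∀ᵐ ω ∂μ, ω ∈ M := by
      have hun : μ (A \ M ∪ Aᶜ \ M) = 0 := measure_union_null hAnull h.symm
      rw [ae_iff]
      apply measure_mono_null _ hun
      intro ω hω
      by_cases hA' : ω ∈ A
      · exact Or.inl ⟨hA', hω⟩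
      · exact Or.inr ⟨hA', hω⟩
    have hxξ : x = ξM := by
      apply AEEqFun.ext
      filter_upwards [hagrM, hMfull] with ω h1 h2
      exact h1 h2
    exact hx (hxξ ▸ hξM)
  have hout : LocOutside μ C x H := by
    intro B hBm hBsub hBpos hmatch
    obtain ⟨ξ, hξ, hagr⟩ := hmatch
    have h0 := hmax B hBm ⟨ξ, hξ, hagr⟩
    have hBM : B \ M = B :=
      Set.Subset.antisymm Set.diff_subset fun ω hω => ⟨hω, (hBsub hω).2⟩
    rw [hBM] at h0
    exact hBpos.ne' h0
  obtain ⟨z, hz⟩ := exists_outside_everywhere hC hA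
  obtain ⟨v, hv1, hv2⟩ := exists_paste hHm x z
  have hvout : LocOutside μ C v Aᶜ := by
    intro B hBm hBsub hBpos hmatch
    obtain ⟨ξ, hξ, hagr⟩ := hmatch
    by_cases hBH : 0 < μ (B ∩ H)
    · refine hout (B ∩ H) (hBm.inter hHm) Set.inter_subset_right hBH ⟨ξ, hξ, ?_⟩
      filter_upwards [hagr, hv1] with ω h1 h2 hmem
      rw [← h2 hmem.2]
      exact h1 hmem.1
    · have hBHz : μ (B ∩ H) = 0 := le_antisymm (not_lt.1 hBH) zero_le
      have hBdpos : 0 < μ (B \ H) := by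
        have h2 : μ B ≤ μ (B ∩ H) + μ (B \ H) := by
          calc μ B = μ ((B ∩ H) ∪ (B \ H)) := by rw [Set.inter_union_diff]
            _ ≤ μ (B ∩ H) + μ (B \ H) := measure_union_le _ _
        rw [hBHz, zero_add] at h2
        exact hBpos.trans_le h2
      refine hz (B \ H) (hBm.diff hHm) (fun ω hω => hBsub hω.1) hBdpos ⟨ξ, hξ, ?_⟩
      filter_upwards [hagr, hv2] with ω h1 h2 hmem
      rw [← h2 hmem.2]
      exact h1 hmem.1
  obtain ⟨x', hx'⟩ := hsep v hvout
  set p : Ω → ℝ := fun ω => v ω * x' ω with hp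
  have hpm : Measurable p := v.measurable.mul x'.measurable
  set w : Ω →ₘ[μ] ℝ := AEEqFun.mk (fun ω => cFun (p ω) * x' ω)
    (((measurable_cFun.comp hpm).mul x'.measurable).aestronglyMeasurable) with hwdef
  set t : Ω →ₘ[μ] ℝ := AEEqFun.mk (fun ω => sgnFun (p ω))
    ((measurable_sgnFun.comp hpm).aestronglyMeasurable) with htdef
  have hwc : ∀ᵐ ω ∂μ, w ω = cFun (p ω) * x' ω := AEEqFun.coeFn_mk _ _
  have htc : ∀ᵐ ω ∂μ, t ω = sgnFun (p ω) := AEEqFun.coeFn_mk _ _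
  refine ⟨w, t, H, ⟨?_, ?_⟩, hHm, hHA, hHpos, ?_⟩
  · filter_upwards [htc] with ω hω
    rw [hω]
    exact sgnFun_tri _
  · intro ξ hξ
    filter_upwards [hx' ξ hξ, hwc, htc] with ω h1 h2 h3 hmem
    rw [h2, h3]
    have hlt : ξ ω * x' ω < p ω := h1 hmem
    calc ξ ω * (cFun (p ω) * x' ω) = cFun (p ω) * (ξ ω * x' ω) := by ring
      _ < sgnFun (p ω) := cFun_mul_lt hlt
  · filter_upwards [hv1, hwc, htc] with ω h1 h2 h3 hmem
    rw [h2, h3, ← h1 hmem]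
    calc v ω * (cFun (p ω) * x' ω) = cFun (p ω) * p ω := by rw [hp]; ring
      _ = sgnFun (p ω) := cFun_mul_self _

end EvenlyAux

/-- **Theorem (characterization of conditionally evenly convex sets).**
Let `C ⊆ L⁰` and let `A` be the maximal set `A_C` (so `Aᶜ = D_C`).  The following
are equivalent: (1) `C` is conditionally evenly convex; (2) `C` satisfies the
countable concatenation property, and for every `x` outside `C` there exists
`x' ∈ L⁰` such that `ξ·x' < x·x'` a.e. on `D_C` for every `ξ ∈ C`. -/
theorem stmt0 (μ : Measure Ω) [IsProbabilityMeasure μ]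
    (C : Set (Ω →ₘ[μ] ℝ)) (A : Set Ω) (hA : IsMaxFull μ C A) :
    CondEvenlyConvex μ C ↔
      (CSet μ C ∧
        ∀ x : Ω →ₘ[μ] ℝ, LocOutside μ C x Aᶜ →
          ∃ x' : Ω →ₘ[μ] ℝ, ∀ ξ ∈ C,
            ∀ᵐ ω ∂μ, ω ∈ Aᶜ → ξ ω * x' ω < x ω * x' ω) := by
  classical
  constructor
  · rintro ⟨A', hA', L, Y, hCeq⟩
    have hCin : ∀ ξ ∈ C, ∀ x' ∈ L, ∀ᵐ ω ∂μ, ω ∈ A'ᶜ → ξ ω * x' ω < Y x' ω := by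
      intro ξ hξ x' hx'
      rw [hCeq] at hξ
      exact Set.mem_iInter₂.1 hξ x' hx'
    constructor
    · -- CSet
      intro B hBm hBd hBcov xseq hxseq z hz
      rw [hCeq]
      refine Set.mem_iInter₂.2 fun x' hx' => ?_
      have hxmem : ∀ n, ∀ᵐ ω ∂μ, ω ∈ A'ᶜ → (xseq n) ω * x' ω < Y x' ω :=
        fun n => hCin (xseq n) (hxseq n) x' hx'
      filter_upwards [ae_all_iff.2 hz, ae_all_iff.2 hxmem] with ω h1 h2 hmem
      have hωcov : ω ∈ ⋃ n, B n := by rw [hBcov]; trivial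
      obtain ⟨n, hn⟩ := Set.mem_iUnion.1 hωcov
      rw [h1 n hn]
      exact h2 n hmem
    · -- local separation for outside points
      intro x hxout
      by_cases hD : μ Aᶜ = 0
      · refine ⟨0, fun ξ hξ => ?_⟩
        have hae : ∀ᵐ ω ∂μ, ω ∉ Aᶜ := measure_eq_zero_iff_ae_notMem.1 hD
        filter_upwards [hae] with ω h1 hmem
        exact absurd hmem h1
      · have hDpos : 0 < μ Aᶜ := (zero_le : (0:ENNReal) ≤ _).lt_of_ne (Ne.symm hD)
        have hxC : x ∉ C := fun hxC =>
          hxout Aᶜ hA.1.compl (subset_refl _) hDpos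
            ⟨x, hxC, Filter.Eventually.of_forall fun ω _ => rfl⟩
        obtain ⟨ξ₀, hξ₀⟩ := EvenlyAux.maxFull_nonempty hA
        set P : Set Ω → Prop := fun F => MeasurableSet F ∧ F ⊆ Aᶜ ∧
          ∃ x' : Ω →ₘ[μ] ℝ, ∀ ξ ∈ C, ∀ᵐ ω ∂μ, ω ∈ F → ξ ω * x' ω < x ω * x' ω with hP
        have h0 : P ∅ := ⟨MeasurableSet.empty, Set.empty_subset _, 0, fun ξ hξ =>
          Filter.Eventually.of_forall (by simp)⟩
        have hU : ∀ F : ℕ → Set Ω, (∀ n, P (F n)) → P (⋃ n, F n) := by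
          intro F hF
          have hFm : ∀ n, MeasurableSet (F n) := fun n => (hF n).1
          choose x' hx' using fun n => (hF n).2.2
          obtain ⟨v, hv⟩ := EvenlyAux.exists_glue F hFm x'
          refine ⟨MeasurableSet.iUnion hFm, Set.iUnion_subset fun n => (hF n).2.1, v,
            fun ξ hξ => ?_⟩
          filter_upwards [ae_all_iff.2 hv, ae_all_iff.2 fun n => hx' n ξ hξ] with ω h1 h2 hmem
          have hωd : ω ∈ ⋃ n, disjointed F n := by rwa [iUnion_disjointed]
          obtain ⟨n, hn⟩ := Set.mem_iUnion.1 hωd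
          rw [h1 n hn]
          exact h2 n (disjointed_subset _ _ hn)
        obtain ⟨G, ⟨hGm, hGA, xG, hxG⟩, hmax⟩ :=
          EvenlyAux.exists_maximal (μ := μ) P (fun B hB => hB.1) h0 hU
        have hGnull : μ (Aᶜ \ G) = 0 := by
          by_contra hcon
          have hEpos : 0 < μ (Aᶜ \ G) := (zero_le : (0:ENNReal) ≤ _).lt_of_ne (Ne.symm hcon)
          set E := Aᶜ \ G with hE
          have hEm : MeasurableSet E := hA.1.compl.diff hGm
          obtain ⟨v, hv1, hv2⟩ := EvenlyAux.exists_paste hEm x ξ₀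
          have hvC : v ∉ C := by
            intro hvC
            refine hxout E hEm Set.diff_subset hEpos ⟨v, hvC, ?_⟩
            filter_upwards [hv1] with ω h hmem
            exact (h hmem).symm
          obtain ⟨x'', hx''L, hx''⟩ :
              ∃ x'' ∈ L, ¬ ∀ᵐ ω ∂μ, ω ∈ A'ᶜ → v ω * x'' ω < Y x'' ω := by
            by_contra hcon2
            push_neg at hcon2
            exact hvC (hCeq ▸ Set.mem_iInter₂.2 hcon2)
          set N : Set Ω := {ω | ω ∈ A'ᶜ ∧ ¬ (v ω * x'' ω < Y x'' ω)} with hN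
          have hNm : MeasurableSet N := by
            have : N = A'ᶜ ∩ {ω | ¬ (v ω * x'' ω < Y x'' ω)} := rfl
            rw [this]
            exact hA'.1.compl.inter
              (measurableSet_lt (v.measurable.mul x''.measurable) (Y x'').measurable).compl
          have hNpos : 0 < μ N := by
            rcases (zero_le : (0:ENNReal) ≤ (μ N)).lt_or_eq with h | h
            · exact h
            exfalso
            apply hx''
            have hae : ∀ᵐ ω ∂μ, ω ∉ N := measure_eq_zero_iff_ae_notMem.1 h.symm
            filter_upwards [hae] with ω h1 hmem
            by_contra h2
            exact h1 ⟨hmem, h2⟩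
          have hNE : μ (N \ E) = 0 := by
            apply measure_eq_zero_iff_ae_notMem.2
            filter_upwards [hCin ξ₀ hξ₀ x'' hx''L, hv2] with ω h1 h2
            intro hω
            obtain ⟨⟨hωA', hωlt⟩, hωE⟩ := hω
            exact hωlt (by rw [h2 hωE]; exact h1 hωA')
          have hNEpos : 0 < μ (N ∩ E) := by
            have h2 : μ N ≤ μ (N ∩ E) + μ (N \ E) := by
              calc μ N = μ ((N ∩ E) ∪ (N \ E)) := by rw [Set.inter_union_diff]
                _ ≤ μ (N ∩ E) + μ (N \ E) := measure_union_le _ _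
            rw [hNE, add_zero] at h2
            exact hNpos.trans_le h2
          have hPNE : P (N ∩ E) := by
            refine ⟨hNm.inter hEm, (Set.inter_subset_right).trans Set.diff_subset,
              x'', fun ξ hξ => ?_⟩
            filter_upwards [hCin ξ hξ x'' hx''L, hv1] with ω h1 h2 hmem
            have hle : Y x'' ω ≤ v ω * x'' ω := not_lt.1 hmem.1.2
            have hvx : v ω = x ω := h2 hmem.2
            calc ξ ω * x'' ω < Y x'' ω := h1 hmem.1.1
              _ ≤ v ω * x'' ω := hle
              _ = x ω * x'' ω := by rw [hvx]
          have hd := hmax _ hPNE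
          have heq : (N ∩ E) \ G = N ∩ E :=
            Set.Subset.antisymm Set.diff_subset fun ω hω => ⟨hω, hω.2.2⟩
          rw [heq] at hd
          exact hNEpos.ne' hd
        refine ⟨xG, fun ξ hξ => ?_⟩
        have hae : ∀ᵐ ω ∂μ, ω ∉ Aᶜ \ G := measure_eq_zero_iff_ae_notMem.1 hGnull
        filter_upwards [hxG ξ hξ, hae] with ω h1 h2 hmem
        have hωG : ω ∈ G := by
          by_contra h3
          exact h2 ⟨hmem, h3⟩
        exact h1 hωG
  · rintro ⟨hC, hsep⟩
    refine ⟨A, hA, ?_⟩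
    by_cases hCuniv : C = Set.univ
    · refine ⟨∅, fun _ => 0, ?_⟩
      rw [hCuniv]
      simp
    · set L : Set (Ω →ₘ[μ] ℝ) := {w | ∃ x t H, x ∉ C ∧ EvenlyAux.Valid μ C A w t ∧
        MeasurableSet H ∧ H ⊆ Aᶜ ∧ 0 < μ H ∧ ∀ᵐ ω ∂μ, ω ∈ H → x ω * w ω = t ω} with hL
      set Y : (Ω →ₘ[μ] ℝ) → Ω →ₘ[μ] ℝ := fun w =>
        if h : ∃ t, EvenlyAux.Valid μ C A w t then (EvenlyAux.exists_min_valid h).choose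
        else 0 with hY
      refine ⟨L, Y, ?_⟩
      apply Set.Subset.antisymm
      · intro ξ hξ
        refine Set.mem_iInter₂.2 fun w hw => ?_
        obtain ⟨x, t, H, hx, hvalid, -⟩ := hw
        have hex : ∃ t, EvenlyAux.Valid μ C A w t := ⟨t, hvalid⟩
        have hYw : EvenlyAux.Valid μ C A w (Y w) := by
          rw [hY]
          simp only [dif_pos hex]
          exact (EvenlyAux.exists_min_valid hex).choose_spec.1
        exact hYw.2 ξ hξ
      · intro y hy
        by_contra hyC
        obtain ⟨w, t, H, hvalid, hHm, hHA, hHpos, hagr⟩ :=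
          EvenlyAux.exists_witness hC hA hsep hyC
        have hwL : w ∈ L := ⟨y, t, H, hyC, hvalid, hHm, hHA, hHpos, hagr⟩
        have hex : ∃ t', EvenlyAux.Valid μ C A w t' := ⟨t, hvalid⟩
        have hYeq : Y w = (EvenlyAux.exists_min_valid hex).choose := by
          rw [hY]
          simp only [dif_pos hex]
        have hmin : ∀ᵐ ω ∂μ, Y w ω ≤ t ω := by
          rw [hYeq]
          exact (EvenlyAux.exists_min_valid hex).choose_spec.2 t hvalid
        have hyS : ∀ᵐ ω ∂μ, ω ∈ Aᶜ → y ω * w ω < Y w ω := Set.mem_iInter₂.1 hy w hwL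
        have hHnull : ∀ᵐ ω ∂μ, ω ∉ H := by
          filter_upwards [hyS, hmin, hagr] with ω h1 h2 h3
          intro hmem
          have hlt := h1 (hHA hmem)
          rw [h3 hmem] at hlt
          exact absurd h2 (not_le.2 hlt)
        exact hHpos.ne' (measure_eq_zero_iff_ae_notMem.2 hHnull)
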